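/- Let m ≥ 2 and c be natural numbers, and let i, j be natural numbers with i + j < m^(c+1). Write a_k = i / m^k % m, b_k = j / m^k % m, and d_k = (i + j) / m^k % m for the base-m digits. Then there exists ε : ℕ → ℕ with ε 0 = 0, ε (c + 1) = 0, and ε k ≤ 1 for all k, such that for every k ≤ c, (a_k : ℤ) + b_k = (d_k : ℤ) + m * ε (k + 1) − ε k. (Consequently, the coefficientwise sum of the base polynomials of i and j equals one of the 2^c modified polynomials of i + j, where a modified polynomial is obtained from the base polynomial of i + j by, for some subset of positions k < c, adding m to the k-th coefficient and subtracting 1 from the (k+1)-st coefficient.) -/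

import Mathlib

private lemma mod_pow_succ' (m k n : ℕ) :
    n % m ^ (k + 1) = m ^ k * (n / m ^ k % m) + n % m ^ k := by
  rw [pow_succ, Nat.mod_mul, Nat.add_comm]

/-- The coefficientwise sum of the base-`m` digit vectors of `i` and `j` equals the
digit vector of `i + j` adjusted by carries `ε k ∈ {0,1}` with no carry in or out:
`a_k + b_k = d_k + m·ε (k+1) − ε k` for all `k ≤ c`. -/
theorem digits_sum_modified (m c : ℕ) (hm : 2 ≤ m) (i j : ℕ)
    (hij : i + j < m ^ (c + 1)) :
    ∃ ε : ℕ → ℕ, ε 0 = 0 ∧ ε (c + 1) = 0 ∧ (∀ k, ε k ≤ 1) ∧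
      ∀ k ≤ c, ((i / m ^ k % m : ℕ) : ℤ) + ((j / m ^ k % m : ℕ) : ℤ)
        = ((i + j) / m ^ k % m : ℕ) + (m : ℤ) * ε (k + 1) - ε k := by
  have hm0 : 0 < m := by omega
  have hpow : ∀ k, 0 < m ^ k := fun k => Nat.pow_pos hm0
  refine ⟨fun k => (i % m ^ k + j % m ^ k) / m ^ k, ?_, ?_, ?_, ?_⟩
  · simp
    omega
  · show (i % m ^ (c + 1) + j % m ^ (c + 1)) / m ^ (c + 1) = 0
    have hi : i % m ^ (c + 1) = i := Nat.mod_eq_of_lt (by omega)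
    have hj : j % m ^ (c + 1) = j := Nat.mod_eq_of_lt (by omega)
    rw [hi, hj]
    exact Nat.div_eq_of_lt hij
  · intro k
    show (i % m ^ k + j % m ^ k) / m ^ k ≤ 1
    have h : i % m ^ k + j % m ^ k < 2 * m ^ k := by
      have := Nat.mod_lt i (hpow k)
      have := Nat.mod_lt j (hpow k)
      omega
    have := (Nat.div_lt_iff_lt_mul (hpow k)).mpr (by omega : i % m ^ k + j % m ^ k < 2 * m ^ k)
    omega
  · intro k _
    show ((i / m ^ k % m : ℕ) : ℤ) + ((j / m ^ k % m : ℕ) : ℤ)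
        = ((i + j) / m ^ k % m : ℕ) + (m : ℤ) * ((i % m ^ (k+1) + j % m ^ (k+1)) / m ^ (k+1) : ℕ)
          - ((i % m ^ k + j % m ^ k) / m ^ k : ℕ)
    set a := i / m ^ k % m with ha
    set b := j / m ^ k % m with hb
    set d := (i + j) / m ^ k % m with hd
    set e := (i % m ^ k + j % m ^ k) / m ^ k with he
    set e' := (i % m ^ (k + 1) + j % m ^ (k + 1)) / m ^ (k + 1) with he'
    -- S_{k+1} = i % m^(k+1) + j % m^(k+1)
    have h1 : i % m ^ (k + 1) = m ^ k * a + i % m ^ k := mod_pow_succ' m k i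
    have h2 : j % m ^ (k + 1) = m ^ k * b + j % m ^ k := mod_pow_succ' m k j
    -- S_k = m^k * e + (i+j) % m^k
    have hSkmod : (i % m ^ k + j % m ^ k) % m ^ k = (i + j) % m ^ k := by
      conv_rhs => rw [Nat.add_mod i j]
    have h3 : i % m ^ k + j % m ^ k = m ^ k * e + (i + j) % m ^ k := by
      conv_lhs => rw [← Nat.div_add_mod (i % m ^ k + j % m ^ k) (m ^ k)]
      rw [hSkmod, he]
    -- S_{k+1} = m^(k+1) * e' + (i+j) % m^(k+1)
    have hSk1mod : (i % m ^ (k + 1) + j % m ^ (k + 1)) % m ^ (k + 1) = (i + j) % m ^ (k + 1) := by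
      rw [Nat.add_mod i j]
    have h4 : i % m ^ (k + 1) + j % m ^ (k + 1)
        = m ^ (k + 1) * e' + (i + j) % m ^ (k + 1) := by
      conv_lhs => rw [← Nat.div_add_mod (i % m ^ (k + 1) + j % m ^ (k + 1)) (m ^ (k + 1))]
      rw [hSk1mod, he']
    have h5 : (i + j) % m ^ (k + 1) = m ^ k * d + (i + j) % m ^ k := mod_pow_succ' m k (i + j)
    -- combine into a single ℕ equation
    have key : m ^ k * (a + b + e) = m ^ k * (d + m * e') := by
      have : m ^ k * a + i % m ^ k + (m ^ k * b + j % m ^ k)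
          = m ^ (k + 1) * e' + (m ^ k * d + (i + j) % m ^ k) := by
        rw [← h1, ← h2, h4, h5]
      rw [pow_succ] at this
      ring_nf
      ring_nf at this
      -- rearrange: use h3 to eliminate i%m^k + j%m^k
      nlinarith [h3, this]
    have keq : a + b + e = d + m * e' := Nat.eq_of_mul_eq_mul_left (hpow k) key
    have := congrArg (Nat.cast : ℕ → ℤ) keq
    push_cast at this
    linarith
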